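/- Let g be an invertible linear endomorphism of a finite-dimensional real inner product space E, and suppose E = F ⊕ F' is an orthogonal direct sum of g-invariant subspaces with dim F = p. Let s₁ ≤ … ≤ s_p be the singular values of g restricted to F and s'₁ ≤ … ≤ s'_q the singular values of g restricted to F'. Then the singular values of g on E are exactly s'₁,…,s'_q, s₁,…,s_p (as a multiset), and the singular value of Λ^p g on the line Λ^p F equals s₁⋯s_p. -/

import Mathlib

/-- Let `E = F ⊕ F'` be an orthogonal direct sum of `g`-invariant subspaces, and let
`s₁ ≤ … ≤ s_p` (resp. `s'₁ ≤ … ≤ s'_q`) be the singular values of `g` on `F`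
(resp. `F'`), presented through singular value decompositions `g (u i) = s i • w i`,
`g (u' i) = s' i • w' i` with orthonormal bases.  Then the singular values of `g` on `E`
are exactly `s'₁, …, s'_q, s₁, …, s_p` (witnessed by the combined singular value
decomposition), and the singular value of `Λ^p g` on the line `Λ^p F` — i.e. the norm of
the image of the unit vector `u₁ ∧ … ∧ u_p`, computed via the Gram determinant formula for
the induced inner product on `Λ^p E` — equals `s₁ ⋯ s_p`. -/
theorem singular_values_of_orthogonal_invariant_splitting
    {E : Type*} [NormedAddCommGroup E] [InnerProductSpace ℝ E] [FiniteDimensional ℝ E]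
    (g : E ≃ₗ[ℝ] E) (F F' : Submodule ℝ E) (p q : ℕ)
    (horth : ∀ x ∈ F, ∀ y ∈ F', (inner ℝ x y : ℝ) = 0) (hcompl : F ⊔ F' = ⊤)
    (hgF : ∀ x ∈ F, g x ∈ F) (hgF' : ∀ x ∈ F', g x ∈ F')
    (s : Fin p → ℝ) (s' : Fin q → ℝ)
    (hs : Monotone s) (hs' : Monotone s') (hsnn : ∀ i, 0 ≤ s i) (hs'nn : ∀ i, 0 ≤ s' i)
    (u w : Fin p → E) (hu : Orthonormal ℝ u) (hw : Orthonormal ℝ w)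
    (huF : ∀ i, u i ∈ F) (hwF : ∀ i, w i ∈ F)
    (huspan : Submodule.span ℝ (Set.range u) = F)
    (hsvd : ∀ i, g (u i) = s i • w i)
    (u' w' : Fin q → E) (hu' : Orthonormal ℝ u') (hw' : Orthonormal ℝ w')
    (hu'F : ∀ i, u' i ∈ F') (hw'F : ∀ i, w' i ∈ F')
    (hu'span : Submodule.span ℝ (Set.range u') = F')
    (hsvd' : ∀ i, g (u' i) = s' i • w' i) :
    (Orthonormal ℝ (Sum.elim u' u) ∧ Orthonormal ℝ (Sum.elim w' w) ∧
      Submodule.span ℝ (Set.range (Sum.elim u' u)) = ⊤ ∧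
      ∀ i : Fin q ⊕ Fin p, g (Sum.elim u' u i) = Sum.elim s' s i • Sum.elim w' w i) ∧
    Real.sqrt (Matrix.of fun i j : Fin p => (inner ℝ (g (u i)) (g (u j)) : ℝ)).det
      = ∏ i, s i := by
  have onElim : ∀ (a : Fin q → E) (b : Fin p → E), Orthonormal ℝ a → Orthonormal ℝ b →
      (∀ i, a i ∈ F') → (∀ i, b i ∈ F) → Orthonormal ℝ (Sum.elim a b) := by
    intro a b ha hb haF hbF
    rw [orthonormal_iff_ite] at ha hb ⊢
    rintro (i | i) (j | j) <;> simp only [Sum.elim_inl, Sum.elim_inr]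
    · simpa using ha i j
    · rw [real_inner_comm]
      simp [horth _ (hbF j) _ (haF i)]
    · simp [horth _ (hbF i) _ (haF j)]
    · simpa using hb i j
  have hmat : (Matrix.of fun i j : Fin p => (inner ℝ (g (u i)) (g (u j)) : ℝ)) =
      Matrix.diagonal (fun i => s i ^ 2) := by
    ext i j
    rw [orthonormal_iff_ite] at hw
    by_cases h : i = j
    · subst h
      have hn : ‖w i‖ * ‖w i‖ = 1 := by rw [← real_inner_self_eq_norm_mul_norm]; simpa using hw i i
      simp [hsvd, inner_smul_left, inner_smul_right, hw i i, sq]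
      left; rw [hn, mul_one]
    · simp [hsvd, inner_smul_left, inner_smul_right, hw i j, h]
  refine ⟨⟨onElim u' u hu' hu hu'F huF, onElim w' w hw' hw hw'F hwF, ?_, ?_⟩, ?_⟩
  · rw [Set.Sum.elim_range, Submodule.span_union, hu'span, huspan, sup_comm, hcompl]
  · rintro (i | i) <;> simp [hsvd, hsvd']
  · rw [hmat, Matrix.det_diagonal]
    have : ∏ i, s i ^ 2 = (∏ i, s i) ^ 2 := by rw [Finset.prod_pow]
    rw [this, Real.sqrt_sq (Finset.prod_nonneg fun i _ => hsnn i)]
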